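/- Let n ≥ 3, 1 ≤ m ≤ n−1, 0 ≤ α ≤ π/2 and t := 1/sin α. If t > m, then Σ_{i=0}^{n−2} C(n−2,i) · I_{n,n−2−i}(α) < exp(n/m) · (1/t), where I_{n,k}(α) := ∫_0^α cos(ρ)^k sin(ρ)^{n−2−k} dρ. -/

import Mathlib

open Real Finset

set_option maxHeartbeats 1000000 in
/-- Let `n ≥ 3`, `1 ≤ m ≤ n−1`, `0 ≤ α ≤ π/2` and `t := 1/sin α`.  If `t > m`, then
`Σ_{i=0}^{n−2} C(n−2,i) · I_{n,n−2−i}(α) < exp(n/m) · (1/t)`, where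
`I_{n,k}(α) := ∫_0^α cos(ρ)^k sin(ρ)^{n−2−k} dρ`. -/
theorem sum_binom_I_bound' (n m : ℕ) (hn : 3 ≤ n) (hm1 : 1 ≤ m) (hm2 : m ≤ n - 1)
    (α : ℝ) (hα0 : 0 ≤ α) (hα1 : α ≤ π / 2)
    (t : ℝ) (ht : t = 1 / Real.sin α) (htm : t > (m : ℝ)) :
    ∑ i ∈ range (n - 1), ((n - 2).choose i : ℝ) *
        ∫ ρ in (0)..α, Real.cos ρ ^ (n - 2 - i) * Real.sin ρ ^ i
      < Real.exp ((n : ℝ) / m) * (1 / t) := by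
  have hm0 : (0:ℝ) < m := by exact_mod_cast hm1
  have ht0 : (0:ℝ) < t := lt_trans hm0 htm
  have hπ := Real.pi_pos
  have hsα0 : 0 ≤ Real.sin α := Real.sin_nonneg_of_nonneg_of_le_pi hα0 (by linarith)
  have hsne : Real.sin α ≠ 0 := by
    intro h; rw [h] at ht; simp at ht; exact absurd ht (by linarith)
  have hsin : Real.sin α = 1 / t := by
    rw [ht]; field_simp
  set s := Real.sin α with hs
  have hs0 : 0 < s := lt_of_le_of_ne hsα0 (Ne.symm hsne)
  have hsm : s < 1 / m := by
    rw [hsin]; exact one_div_lt_one_div_of_lt hm0 htm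
  have hm1' : (1:ℝ) ≤ m := by exact_mod_cast hm1
  have hs1 : s < 1 := lt_of_lt_of_le hsm (by rw [div_le_one hm0]; exact hm1')
  have hαlt : α < π / 2 := by
    rcases lt_or_eq_of_le hα1 with h | h
    · exact h
    · exfalso; rw [h] at hs; simp [Real.sin_pi_div_two] at hs; linarith
  have hcos : 0 < Real.cos α := Real.cos_pos_of_mem_Ioo ⟨by linarith, hαlt⟩
  have hn2 : ((n - 2 : ℕ) : ℝ) = (n : ℝ) - 2 := by
    have h2 : (2:ℕ) ≤ n := by omega
    push_cast [Nat.cast_sub h2]; ring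
  have hIf : IntervalIntegrable (fun ρ => (Real.sin ρ + Real.cos ρ) ^ (n - 2))
      MeasureTheory.volume 0 α := Continuous.intervalIntegrable (by fun_prop) 0 α
  -- Step 1: rewrite sum as single integral
  have step1 : ∑ i ∈ range (n - 1), ((n - 2).choose i : ℝ) *
        ∫ ρ in (0:ℝ)..α, Real.cos ρ ^ (n - 2 - i) * Real.sin ρ ^ i
      = ∫ ρ in (0:ℝ)..α, (Real.sin ρ + Real.cos ρ) ^ (n - 2) := by
    have hint : ∀ i ∈ range (n - 1), IntervalIntegrable
        (fun ρ => ((n - 2).choose i : ℝ) * (Real.cos ρ ^ (n - 2 - i) * Real.sin ρ ^ i))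
        MeasureTheory.volume 0 α := by
      intro i _
      exact Continuous.intervalIntegrable (by fun_prop) 0 α
    rw [show (∑ i ∈ range (n - 1), ((n - 2).choose i : ℝ) *
        ∫ ρ in (0:ℝ)..α, Real.cos ρ ^ (n - 2 - i) * Real.sin ρ ^ i)
        = ∑ i ∈ range (n - 1), ∫ ρ in (0:ℝ)..α,
          ((n - 2).choose i : ℝ) * (Real.cos ρ ^ (n - 2 - i) * Real.sin ρ ^ i) from
      Finset.sum_congr rfl fun i _ => (intervalIntegral.integral_const_mul _ _).symm]
    rw [← intervalIntegral.integral_finset_sum hint]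
    apply intervalIntegral.integral_congr
    intro ρ _
    simp only [add_pow]
    rw [show n - 2 + 1 = n - 1 from by omega]
    exact (Finset.sum_congr rfl fun i hi => by ring).symm
  rw [step1, ← hsin]
  set c : ℝ := (n : ℝ) with hc
  have hc3 : (3:ℝ) ≤ c := by rw [hc]; exact_mod_cast hn
  rcases le_or_gt (1/2 : ℝ) s with hA | hB
  · -- Case A : s ≥ 1/2, so m = 1
    have hm_eq : m = 1 := by
      have h2 : t ≤ 2 := by
        rw [ht]; rw [div_le_iff₀ hs0]; linarith
      have h3 : (m:ℝ) < 2 := lt_of_lt_of_le htm h2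
      have h4 : m < 2 := by exact_mod_cast h3
      omega
    subst hm_eq
    have hbound : ∫ ρ in (0:ℝ)..α, (Real.sin ρ + Real.cos ρ) ^ (n - 2)
        ≤ Real.sqrt 2 ^ (n - 2) * α := by
      have hmono := intervalIntegral.integral_mono_on (μ := MeasureTheory.volume) hα0
        hIf (intervalIntegrable_const (c := Real.sqrt 2 ^ (n - 2)))
        (fun ρ hρ => by
          have h1 : 0 ≤ Real.sin ρ := Real.sin_nonneg_of_nonneg_of_le_pi hρ.1 (by linarith [hρ.2])
          have h2 : 0 ≤ Real.cos ρ := Real.cos_nonneg_of_mem_Icc ⟨by linarith [hρ.1], by linarith [hρ.2]⟩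
          have h3 : Real.sin ρ + Real.cos ρ ≤ Real.sqrt 2 := by
            nlinarith [Real.sq_sqrt (by norm_num : (0:ℝ) ≤ 2), Real.sqrt_nonneg 2,
              Real.sin_sq_add_cos_sq ρ, sq_nonneg (Real.sin ρ - Real.cos ρ),
              sq_nonneg (Real.sin ρ + Real.cos ρ - Real.sqrt 2)]
          exact pow_le_pow_left₀ (by linarith) h3 _)
      simpa [mul_comm] using hmono
    have hsqrt : Real.sqrt 2 ≤ Real.exp (1/2) := by
      have hE : Real.exp (1/2) * Real.exp (1/2) = Real.exp 1 := by
        rw [← Real.exp_add]; norm_num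
      nlinarith [Real.sq_sqrt (by norm_num : (0:ℝ) ≤ 2), Real.sqrt_nonneg 2,
        Real.add_one_le_exp (1:ℝ), Real.exp_pos (1/2 : ℝ)]
    have hpow : Real.sqrt 2 ^ (n - 2) ≤ Real.exp ((c - 2)/2) := by
      calc Real.sqrt 2 ^ (n - 2) ≤ Real.exp (1/2) ^ (n - 2) :=
            pow_le_pow_left₀ (Real.sqrt_nonneg 2) hsqrt _
        _ = Real.exp (((n - 2:ℕ):ℝ) * (1/2)) := (Real.exp_nat_mul _ _).symm
        _ = Real.exp ((c - 2)/2) := by rw [hn2]; ring_nf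
    have hfin : Real.sqrt 2 ^ (n - 2) * α < Real.exp (c / 1) * s := by
      have h1 : Real.sqrt 2 ^ (n - 2) * α ≤ Real.exp ((c - 2)/2) * (π/2) :=
        mul_le_mul hpow hα1 hα0 (Real.exp_pos _).le
      have h2 : Real.exp ((c - 2)/2) * (π/2) < Real.exp c * (1/2) := by
        have hsplit : Real.exp c = Real.exp ((c - 2)/2) * Real.exp ((c + 2)/2) := by
          rw [← Real.exp_add]; ring_nf
        rw [hsplit]
        have hp1 := Real.exp_pos ((c - 2)/2)
        have hπe : π < Real.exp ((c + 2)/2) := by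
          have ha : Real.exp 2 ≤ Real.exp ((c + 2)/2) := Real.exp_le_exp.mpr (by linarith)
          have hb : Real.exp 2 = Real.exp 1 * Real.exp 1 := by rw [← Real.exp_add]; norm_num
          nlinarith [Real.add_one_le_exp (1:ℝ), Real.pi_lt_d2]
        nlinarith
      have h3 : Real.exp c * (1/2) ≤ Real.exp c * s := by
        nlinarith [(Real.exp_pos c).le]
      calc Real.sqrt 2 ^ (n-2) * α ≤ _ := h1
        _ < _ := h2
        _ ≤ _ := h3
        _ = Real.exp (c/1) * s := by norm_num
    push_cast
    exact lt_of_le_of_lt hbound hfin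
  · -- Case B : s < 1/2
    have hαπ : α ≤ π := by linarith
    have hbound : ∫ ρ in (0:ℝ)..α, (Real.sin ρ + Real.cos ρ) ^ (n - 2)
        ≤ ((1 + s) ^ (n - 2) / Real.cos α) * s := by
      have hmono := intervalIntegral.integral_mono_on (μ := MeasureTheory.volume) hα0
        hIf
        (Continuous.intervalIntegrable
          (show Continuous fun ρ => ((1 + s) ^ (n - 2) / Real.cos α) * Real.cos ρ by fun_prop) 0 α)
        (fun ρ hρ => by
          have h1 : 0 ≤ Real.sin ρ := Real.sin_nonneg_of_nonneg_of_le_pi hρ.1 (by linarith [hρ.2])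
          have h2 : 0 ≤ Real.cos ρ := Real.cos_nonneg_of_mem_Icc ⟨by linarith [hρ.1], by linarith [hρ.2]⟩
          have hsρ : Real.sin ρ ≤ s := by
            rcases eq_or_lt_of_le hρ.2 with h | h
            · rw [hs, h]
            · exact le_of_lt (Real.strictMonoOn_sin ⟨by linarith [hρ.1], by linarith [hρ.2]⟩
                ⟨by linarith, le_of_lt hαlt⟩ h)
          have hcρ : Real.cos α ≤ Real.cos ρ :=
            Real.cos_le_cos_of_nonneg_of_le_pi hρ.1 hαπ hρ.2
          have hb1 : (Real.sin ρ + Real.cos ρ) ^ (n - 2) ≤ (1 + s) ^ (n - 2) :=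
            pow_le_pow_left₀ (by linarith) (by linarith [Real.cos_le_one ρ]) _
          have hb2 : (1:ℝ) ≤ Real.cos ρ / Real.cos α := (one_le_div hcos).mpr hcρ
          calc (Real.sin ρ + Real.cos ρ) ^ (n - 2) ≤ (1 + s) ^ (n - 2) := hb1
            _ ≤ (1 + s) ^ (n - 2) * (Real.cos ρ / Real.cos α) :=
              le_mul_of_one_le_right (pow_nonneg (by linarith) _) hb2
            _ = ((1 + s) ^ (n - 2) / Real.cos α) * Real.cos ρ := by ring)
      have hint : (∫ ρ in (0:ℝ)..α, ((1 + s) ^ (n - 2) / Real.cos α) * Real.cos ρ)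
          = ((1 + s) ^ (n - 2) / Real.cos α) * s := by
        rw [intervalIntegral.integral_const_mul, integral_cos]
        simp
        exact Or.inl rfl
      rw [hint] at hmono
      exact hmono
    have hkey : (1 + s) ^ (n - 2) / Real.cos α < Real.exp (c / m) := by
      rw [div_lt_iff₀ hcos]
      have hA1 : (1 + s) ^ (n - 2) ≤ Real.exp ((c - 2) * s) := by
        calc (1 + s) ^ (n - 2) ≤ Real.exp s ^ (n - 2) :=
              pow_le_pow_left₀ (by linarith) (by linarith [Real.add_one_le_exp s]) _
          _ = Real.exp (((n - 2:ℕ):ℝ) * s) := (Real.exp_nat_mul _ _).symm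
          _ = Real.exp ((c - 2) * s) := by rw [hn2]
      have hA2 : Real.exp (-(2*s)) ≤ Real.cos α := by
        have hcsq : Real.cos α ^ 2 = 1 - s ^ 2 := by
          have hpyth := Real.sin_sq_add_cos_sq α
          rw [← hs] at hpyth; linarith
        have h1 : Real.exp (-(4*s)) ≤ 1 / (1 + 4*s) := by
          rw [Real.exp_neg, inv_eq_one_div]
          apply one_div_le_one_div_of_le (by linarith)
          linarith [Real.add_one_le_exp (4*s)]
        have h2 : 1 / (1 + 4*s) ≤ 1 - s^2 := by
          rw [div_le_iff₀ (by linarith)]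
          nlinarith
        have h3 : Real.exp (-(2*s)) ^ 2 = Real.exp (-(4*s)) := by
          rw [sq, ← Real.exp_add]; ring_nf
        nlinarith [Real.exp_pos (-(2*s))]
      have hA3 : (c - 2) * s < c / m - 2 * s := by
        have h1 : c * s < c * (1/m) := mul_lt_mul_of_pos_left hsm (by linarith)
        have h2 : c * (1/m) = c / m := by ring
        nlinarith
      calc (1 + s) ^ (n - 2) ≤ Real.exp ((c - 2) * s) := hA1
        _ < Real.exp (c / m - 2 * s) := Real.exp_lt_exp.mpr hA3
        _ = Real.exp (c / m) * Real.exp (-(2*s)) := by rw [← Real.exp_add]; ring_nf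
        _ ≤ Real.exp (c / m) * Real.cos α :=
          mul_le_mul_of_nonneg_left hA2 (Real.exp_pos _).le
    calc ∫ ρ in (0:ℝ)..α, (Real.sin ρ + Real.cos ρ) ^ (n - 2)
        ≤ ((1 + s) ^ (n - 2) / Real.cos α) * s := hbound
      _ < Real.exp (c / m) * s := mul_lt_mul_of_pos_right hkey hs0
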